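/- Let D_1, D_2, D_3 be directed graphs such that D_1 is a butterfly minor of D_2 and D_2 is a butterfly minor of D_3. Then D_1 is a butterfly minor of D_3. -/

import Mathlib

/-!
Common definitions: directed graphs as vertex/edge sets, directed paths and
walks, rays, arborescences, tree-like models and butterfly minors, laced
paths, knit rays, and the shapes (dominated directed rays, stars, combs,
chains of triangles) from the paper.
-/

universe u

/-- A directed graph on an ambient vertex type `V`, given by a set of vertices
and a set of directed edges (ordered pairs of vertices). -/
structure DGraph (V : Type u) where
  verts : Set V
  edges : Set (V × V)

namespace DGraph

variable {V : Type u}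

instance : Union (DGraph V) := ⟨fun G H => ⟨G.verts ∪ H.verts, G.edges ∪ H.edges⟩⟩
instance : Inter (DGraph V) := ⟨fun G H => ⟨G.verts ∩ H.verts, G.edges ∩ H.edges⟩⟩
instance : HasSubset (DGraph V) := ⟨fun H G => H.verts ⊆ G.verts ∧ H.edges ⊆ G.edges⟩
instance : EmptyCollection (DGraph V) := ⟨⟨∅, ∅⟩⟩

/-- The union of a family of directed graphs. -/
def iUnion {ι : Type} (f : ι → DGraph V) : DGraph V :=
  ⟨⋃ i, (f i).verts, ⋃ i, (f i).edges⟩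

/-- The directed graph obtained by reversing the orientation of every edge. -/
def reverse (G : DGraph V) : DGraph V := ⟨G.verts, {e | (e.2, e.1) ∈ G.edges}⟩

/-- The directed graph consisting of a single vertex and no edges. -/
def single (v : V) : DGraph V := ⟨{v}, ∅⟩

/-- Two vertices joined by both directed edges. -/
def linkBoth (a b : V) : DGraph V := ⟨{a, b}, {(a, b), (b, a)}⟩

/-- A directed triangle (directed cycle of length 3) on `a, b, c`. -/
def triangle (a b c : V) : DGraph V := ⟨{a, b, c}, {(a, b), (b, c), (c, a)}⟩

/-- The directed graph of a list of vertices with its consecutive edges. -/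
def ofList (l : List V) : DGraph V := ⟨{v | v ∈ l}, {e | e ∈ l.zip l.tail}⟩

/-- `𝒟(P)` for the (undirected) path `P` given by the list `l`:
the double path on `l`. -/
def doubleOfList (l : List V) : DGraph V := ofList l ∪ (ofList l).reverse

/-- The directed cycle through the vertices of `l` in order. -/
def cycleOfList (l : List V) : DGraph V :=
  ⟨{v | v ∈ l}, {e | e ∈ l.zip (l.tail ++ l.take 1)}⟩

/-- `G` is a directed cycle. -/
def IsDirectedCycle (G : DGraph V) : Prop :=
  ∃ l : List V, l.Nodup ∧ 2 ≤ l.length ∧ G = cycleOfList l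

/-- The out-oriented ray with vertices `f 0, f 1, …`, rooted at `f 0`. -/
def outRay (f : ℕ → V) : DGraph V :=
  ⟨Set.range f, {e | ∃ n, e = (f n, f (n + 1))}⟩

/-- The in-oriented ray with vertices `f 0, f 1, …`, rooted at `f 0`. -/
def inRay (f : ℕ → V) : DGraph V :=
  ⟨Set.range f, {e | ∃ n, e = (f (n + 1), f n)}⟩

/-- `𝒟(R)` for the undirected ray `R` with vertices `f 0, f 1, …`. -/
def doubleRay (f : ℕ → V) : DGraph V := outRay f ∪ inRay f

/-- The dominated directed ray on an out-oriented ray: the out-oriented ray `f`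
rooted at `f 0` together with the edges `(f (n+1), f 0)`. -/
def domOutRay (f : ℕ → V) : DGraph V :=
  ⟨Set.range f, {e | ∃ n, e = (f n, f (n + 1))} ∪ {e | ∃ n, e = (f (n + 1), f 0)}⟩

/-- The dominated directed ray on an in-oriented ray: the in-oriented ray `f`
rooted at `f 0` together with the edges `(f 0, f (n+1))`. -/
def domInRay (f : ℕ → V) : DGraph V :=
  ⟨Set.range f, {e | ∃ n, e = (f (n + 1), f n)} ∪ {e | ∃ n, e = (f 0, f (n + 1))}⟩

/-- `G` is a dominated directed ray. -/
def IsDominatedDirectedRay (G : DGraph V) : Prop :=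
  ∃ f : ℕ → V, Function.Injective f ∧ (G = domOutRay f ∨ G = domInRay f)

/-- The internal vertices of a path or walk given as a list. -/
def internals (l : List V) : List V := l.tail.dropLast

/-- `l` is a directed path in `G`. -/
def IsPath (G : DGraph V) (l : List V) : Prop :=
  l ≠ [] ∧ l.Nodup ∧ (∀ v ∈ l, v ∈ G.verts) ∧ ∀ e ∈ l.zip l.tail, e ∈ G.edges

/-- `l` is a directed path in `G` with startvertex `a` and endvertex `b`. -/
def IsPathFrom (G : DGraph V) (a b : V) (l : List V) : Prop :=
  IsPath G l ∧ l.head? = some a ∧ l.getLast? = some b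

/-- There is a directed `a`–`b` path in `G`. -/
def Reaches (G : DGraph V) (a b : V) : Prop := ∃ l, IsPathFrom G a b l

/-- `G` is strongly connected. -/
def StronglyConnected (G : DGraph V) : Prop :=
  ∀ a ∈ G.verts, ∀ b ∈ G.verts, Reaches G a b

/-- `l` is a directed `X`–`Y` path in `G`: it starts in `X`, ends in `Y` and
has no internal vertex in `X ∪ Y`. -/
def IsXYPath (G : DGraph V) (X Y : Set V) (l : List V) : Prop :=
  IsPath G l ∧ (∃ a ∈ X, l.head? = some a) ∧ (∃ b ∈ Y, l.getLast? = some b) ∧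
    ∀ v ∈ internals l, v ∉ X ∪ Y

/-- `T` is an in-arborescence rooted at `r`: its underlying graph is a tree
and all edges are directed towards the root `r`. -/
def IsInArborescence (T : DGraph V) (r : V) : Prop :=
  r ∈ T.verts ∧ (∀ e ∈ T.edges, e.1 ∈ T.verts ∧ e.2 ∈ T.verts) ∧
  (∀ w, (r, w) ∉ T.edges) ∧ (∀ v ∈ T.verts, v ≠ r → ∃! w, (v, w) ∈ T.edges) ∧
  (∀ v ∈ T.verts, Reaches T v r)

/-- `T` is an out-arborescence rooted at `r`. -/
def IsOutArborescence (T : DGraph V) (r : V) : Prop := IsInArborescence T.reverse r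

/-- `v` is a leaf of the in-arborescence `T` rooted at `r`. -/
def IsLeafOfInArb (T : DGraph V) (r v : V) : Prop :=
  v ∈ T.verts ∧ v ≠ r ∧ ∀ u, (u, v) ∉ T.edges

/-- `v` is a leaf of the out-arborescence `T` rooted at `r`. -/
def IsLeafOfOutArb (T : DGraph V) (r v : V) : Prop := IsLeafOfInArb T.reverse r v

/-- A tree-like model of `H` in `D`; every vertex of `H` is identified with the
common root of the in- and out-arborescence of its branch set. -/
structure TreeLikeModel (D H : DGraph V) where
  bag : V → DGraph V
  tin : V → DGraph V
  tout : V → DGraph V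
  emap : V × V → V × V
  bag_sub : ∀ v ∈ H.verts, bag v ⊆ D
  bag_disjoint : ∀ v ∈ H.verts, ∀ w ∈ H.verts, v ≠ w → (bag v).verts ∩ (bag w).verts = ∅
  bag_eq : ∀ v ∈ H.verts, bag v = tin v ∪ tout v
  tin_arb : ∀ v ∈ H.verts, IsInArborescence (tin v) v
  tout_arb : ∀ v ∈ H.verts, IsOutArborescence (tout v) v
  roots_eq : ∀ v ∈ H.verts, (tin v).verts ∩ (tout v).verts = {v}
  emap_mem : ∀ e ∈ H.edges, emap e ∈ D.edges
  emap_tail : ∀ e ∈ H.edges, (emap e).1 ∈ (tout e.1).verts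
  emap_head : ∀ e ∈ H.edges, (emap e).2 ∈ (tin e.2).verts

/-- `H` is a butterfly minor of `D`. -/
def IsButterflyMinor (D H : DGraph V) : Prop := Nonempty (TreeLikeModel D H)

/-- `G` is a double path (`𝒟(P)` for an undirected path `P`) with endpoints
`a` and `b`. -/
def IsDoublePath (G : DGraph V) (a b : V) : Prop :=
  ∃ l : List V, l.Nodup ∧ l.head? = some a ∧ l.getLast? = some b ∧ G = doubleOfList l

/-- `G = 𝒟(S)` for a subdivided star `S` with infinitely many leaves, with
centre `c` and branches `q n`; `teeth` is the set of leaves of `S`. -/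
def IsDSubdividedStar (G : DGraph V) (teeth : Set V) : Prop :=
  ∃ (c : V) (q : ℕ → List V),
    (∀ n, (q n).Nodup ∧ (q n).head? = some c ∧ 2 ≤ (q n).length) ∧
    (∀ m n, m ≠ n → ∀ v, v ∈ q m → v ∈ q n → v = c) ∧
    G = iUnion (fun n => doubleOfList (q n)) ∧
    teeth = {v | ∃ n, (q n).getLast? = some v}

/-- `G` is obtained from `𝒟(S)` for a subdivided star `S` by replacing the
centre of infinite degree by a dominated directed ray. -/
def IsRayCentreStar (G : DGraph V) (teeth : Set V) : Prop :=
  ∃ (f : ℕ → V) (R : DGraph V) (g : ℕ → V) (q : ℕ → List V),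
    Function.Injective f ∧ (R = domOutRay f ∨ R = domInRay f) ∧
    (∀ n, (q n).Nodup ∧ (q n).head? = some (g n)) ∧
    (∀ n, ∀ v ∈ q n, v ∉ Set.range f) ∧
    (∀ m n, m ≠ n → ∀ v ∈ q m, v ∉ q n) ∧
    G = R ∪ iUnion (fun n => doubleOfList (q n) ∪ linkBoth (f n) (g n)) ∧
    teeth = {v | ∃ n, (q n).getLast? = some v}

/-- `G` is shaped by a star, with set of teeth `teeth`. -/
def IsShapedByStar (G : DGraph V) (teeth : Set V) : Prop :=
  (IsDominatedDirectedRay G ∧ teeth = G.verts) ∨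
  IsDSubdividedStar G teeth ∨ IsRayCentreStar G teeth

/-- `G = 𝒟(C)` for a comb `C` with spine `f`, branches `q n` attached at
`f (α n)`; `teeth` is the set of teeth of `C`. -/
def IsDComb (G : DGraph V) (teeth : Set V) : Prop :=
  ∃ (f : ℕ → V) (α : ℕ → ℕ) (q : ℕ → List V),
    Function.Injective f ∧ Function.Injective α ∧
    (∀ n, (q n).Nodup ∧ (q n).head? = some (f (α n))) ∧
    (∀ n, ∀ v ∈ (q n).tail, v ∉ Set.range f) ∧
    (∀ m n, m ≠ n → ∀ v ∈ q m, v ∉ q n) ∧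
    G = doubleRay f ∪ iUnion (fun n => doubleOfList (q n)) ∧
    teeth = {v | ∃ n, (q n).getLast? = some v}

/-- The double path on `l` together with both edges between `b` and the first
vertex of `l` (empty if `l` is empty). -/
def branchGraph (b : V) (l : List V) : DGraph V :=
  match l with
  | [] => ∅
  | h :: _ => doubleOfList l ∪ linkBoth b h

/-- `G` is obtained from `𝒟(C)` for a comb `C` by replacing each junction of
`C` by a directed cycle of length 3 as described in the paper.  Position `k`
of the spine is replaced by the piece `S k` (a single vertex, or a directed
triangle at junctions), with `L k`, `R k`, `B k` the vertices of `S k` to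
which the left spine part, the right spine part and the branch attach, and
`t n` the tooth of branch `n`. -/
def IsTriangleComb (G : DGraph V) (teeth : Set V) : Prop :=
  ∃ (α : ℕ → ℕ) (q : ℕ → List V) (S : ℕ → DGraph V) (L R B : ℕ → V) (t : ℕ → V),
    Function.Injective α ∧
    (∀ j k, j ≠ k → (S j).verts ∩ (S k).verts = ∅) ∧
    (∀ n, (q n).Nodup) ∧
    (∀ m n, m ≠ n → ∀ v ∈ q m, v ∉ q n) ∧
    (∀ n, ∀ v ∈ q n, ∀ k, v ∉ (S k).verts) ∧
    (∀ k, L k ∈ (S k).verts ∧ R k ∈ (S k).verts ∧ B k ∈ (S k).verts) ∧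
    (∀ k, (¬ ∃ n, α n = k ∧ 1 ≤ k) → ∃ v, S k = single v) ∧
    (∀ n, 1 ≤ α n → ∃ a b c, a ≠ b ∧ b ≠ c ∧ a ≠ c ∧ S (α n) = triangle a b c) ∧
    (∀ n, 1 ≤ α n → q n ≠ [] →
      L (α n) ≠ R (α n) ∧ L (α n) ≠ B (α n) ∧ R (α n) ≠ B (α n)) ∧
    (∀ n, 1 ≤ α n → q n = [] →
      t n ∈ (S (α n)).verts ∧ L (α n) ≠ R (α n) ∧ t n ≠ L (α n) ∧ t n ≠ R (α n)) ∧
    (∀ n, q n ≠ [] → (q n).getLast? = some (t n)) ∧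
    (∀ n, α n = 0 → q n = [] → t n ∈ (S 0).verts) ∧
    G = iUnion S ∪ iUnion (fun k => linkBoth (R k) (L (k + 1))) ∪
        iUnion (fun n => branchGraph (B (α n)) (q n)) ∧
    teeth = Set.range t

/-- `G` is shaped by a comb, with set of teeth `teeth`. -/
def IsShapedByComb (G : DGraph V) (teeth : Set V) : Prop :=
  IsDComb G teeth ∨ IsTriangleComb G teeth

/-- The core of a chain of triangles: triangles `a i, b i, c i` together with
the edges `(a (i+1), a i)` and `(c i, c (i+1))`. -/
def chainCore (a b c : ℕ → V) : DGraph V :=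
  ⟨Set.range a ∪ Set.range b ∪ Set.range c,
   {e | ∃ i, e = (a i, b i) ∨ e = (b i, c i) ∨ e = (c i, a i) ∨
        e = (a (i + 1), a i) ∨ e = (c i, c (i + 1))}⟩

/-- `G` is a chain of triangles with set of teeth `teeth`. -/
def IsChainOfTriangles (G : DGraph V) (teeth : Set V) : Prop :=
  ∃ (a b c : ℕ → V) (q : ℕ → List V),
    (Function.Injective fun p : ℕ × Fin 3 => ![a, b, c] p.2 p.1) ∧
    (∀ i, (q i).Nodup ∧ (q i).head? = some (b i)) ∧
    (∀ i, ∀ v ∈ (q i).tail, ∀ j, v ≠ a j ∧ v ≠ b j ∧ v ≠ c j) ∧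
    (∀ i j, i ≠ j → ∀ v ∈ q i, v ∉ q j) ∧
    G = chainCore a b c ∪ iUnion (fun i => doubleOfList (q i)) ∧
    teeth = {v | ∃ i, (q i).getLast? = some v}

/-- `G` is a subdivided in-star with centre (root) `c` and all edges directed
towards `c`; it has infinitely many leaves and `teeth` is its set of leaves. -/
def IsSubdividedInStar (G : DGraph V) (teeth : Set V) : Prop :=
  ∃ (c : V) (q : ℕ → List V),
    (∀ n, (q n).Nodup ∧ (q n).getLast? = some c ∧ 2 ≤ (q n).length) ∧
    (∀ m n, m ≠ n → ∀ v, v ∈ q m → v ∈ q n → v = c) ∧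
    G = iUnion (fun n => ofList (q n)) ∧
    teeth = {v | ∃ n, (q n).head? = some v}

/-- `G` is a subdivided out-star. -/
def IsSubdividedOutStar (G : DGraph V) (teeth : Set V) : Prop :=
  IsSubdividedInStar G.reverse teeth

/-- `G = 𝒟(K_{1,∞})`. -/
def IsDInfiniteStar (G : DGraph V) : Prop :=
  ∃ (c : V) (g : ℕ → V), Function.Injective g ∧ (∀ n, g n ≠ c) ∧
    G = ⟨insert c (Set.range g), {e | ∃ n, e = (c, g n) ∨ e = (g n, c)}⟩

/-- `G = 𝒟(R)` for an undirected ray `R`. -/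
def IsDoubleRayGraph (G : DGraph V) : Prop :=
  ∃ f : ℕ → V, Function.Injective f ∧ G = doubleRay f

/-- `G` is a subdivision of a dominated directed ray (parallel edges being
collapsed): the ray `f`, its original vertices sitting at the positions
`α n ≥ 1`, and for each `n` a subdivided dominating edge `p n`. -/
def IsSubdivDominatedRay (G : DGraph V) : Prop :=
  (∃ (f : ℕ → V) (α : ℕ → ℕ) (p : ℕ → List V),
    Function.Injective f ∧ StrictMono α ∧ (∀ n, 1 ≤ α n) ∧
    (∀ n, (p n).Nodup ∧ (p n).head? = some (f (α n)) ∧ (p n).getLast? = some (f 0) ∧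
      2 ≤ (p n).length) ∧
    (∀ n, ∀ v ∈ internals (p n), v ∉ Set.range f) ∧
    (∀ m n, m ≠ n → ∀ v ∈ internals (p m), v ∉ p n) ∧
    G = outRay f ∪ iUnion (fun n => ofList (p n))) ∨
  (∃ (f : ℕ → V) (α : ℕ → ℕ) (p : ℕ → List V),
    Function.Injective f ∧ StrictMono α ∧ (∀ n, 1 ≤ α n) ∧
    (∀ n, (p n).Nodup ∧ (p n).head? = some (f 0) ∧ (p n).getLast? = some (f (α n)) ∧
      2 ≤ (p n).length) ∧
    (∀ n, ∀ v ∈ internals (p n), v ∉ Set.range f) ∧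
    (∀ m n, m ≠ n → ∀ v ∈ internals (p m), v ∉ p n) ∧
    G = inRay f ∪ iUnion (fun n => ofList (p n)))

section Laced

variable [DecidableEq V]

/-- The segment of the path `l` from `x` to `y` (inclusive). -/
def seg (l : List V) (x y : V) : List V :=
  (l.drop (l.idxOf x)).take (l.idxOf y + 1 - l.idxOf x)

/-- `x ≤ y` along the path `l`. -/
def leIn (l : List V) (x y : V) : Prop :=
  x ∈ l ∧ y ∈ l ∧ l.idxOf x ≤ l.idxOf y

/-- `x < y` along the path `l`. -/
def ltIn (l : List V) (x y : V) : Prop :=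
  x ∈ l ∧ y ∈ l ∧ l.idxOf x < l.idxOf y

/-- The directed paths `P` and `Q` are laced. -/
def Laced (P Q : List V) : Prop :=
  (∀ v ∈ P, v ∉ Q) ∨
  ∃ (ℓ : ℕ) (x y : ℕ → V), 1 ≤ ℓ ∧
    (∀ i, 1 ≤ i → i ≤ ℓ → leIn P (x i) (y i) ∧ leIn Q (x i) (y i)) ∧
    (∀ i, 1 ≤ i → i < ℓ → ltIn P (y i) (x (i + 1)) ∧ ltIn Q (y (i + 1)) (x i)) ∧
    (∀ i, 1 ≤ i → i ≤ ℓ → seg P (x i) (y i) = seg Q (x i) (y i)) ∧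
    (∀ i, 1 ≤ i → i < ℓ → ∀ v ∈ internals (seg Q (y (i + 1)) (x i)), v ∉ P) ∧
    (∀ v ∈ Q.take (Q.idxOf (x ℓ) + 1), v ∈ P → v = x ℓ) ∧
    (∀ v ∈ Q.drop (Q.idxOf (y 1)), v ∈ P → v = y 1)

end Laced

/-- The out-ray `f` and the in-ray `g` with common root are knit:
`x i = f (p i) = g (p' i)` and `y i = f (q i) = g (q' i)` are the shared
segments, in the orders required in the paper. -/
def Knit (f g : ℕ → V) : Prop :=
  f 0 = g 0 ∧
  ∃ p q p' q' : ℕ → ℕ,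
    (∀ i, 0 < p i ∧ p i ≤ q i ∧ q i < p (i + 1)) ∧
    (∀ i, 0 < q' i ∧ q' i ≤ p' i ∧ p' i < q' (i + 1)) ∧
    (∀ i, q i - p i = p' i - q' i) ∧
    (∀ i, ∀ k ≤ q i - p i, f (p i + k) = g (p' i - k)) ∧
    (∀ i, ∀ m, p' i < m → m < q' (i + 1) → g m ∉ Set.range f) ∧
    (∀ m, 0 < m → m < q' 0 → g m ∉ Set.range f)

section Contract

variable [DecidableEq V]

/-- The map identifying `v` with `u`. -/
def contractFun (u v : V) : V → V := fun x => if x = v then u else x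

/-- Contracting the edge `(u, v)` of `G` onto the vertex `u`. -/
def contractEdge (G : DGraph V) (u v : V) : DGraph V :=
  ⟨contractFun u v '' G.verts,
   {e | e ≠ (u, u) ∧ ∃ e' ∈ G.edges, e = (contractFun u v e'.1, contractFun u v e'.2)}⟩

end Contract

/-- The edge `(u, v)` of `G` is butterfly contractible. -/
def IsButterflyContractibleEdge (G : DGraph V) (u v : V) : Prop :=
  (u, v) ∈ G.edges ∧
  ((∀ w, (u, w) ∈ G.edges → w = v) ∨ (∀ w, (w, v) ∈ G.edges → w = u))

/-- `G` and `H` are isomorphic directed graphs. -/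
def Isom (G H : DGraph V) : Prop :=
  ∃ φ : V → V, Set.BijOn φ G.verts H.verts ∧
    ∀ u ∈ G.verts, ∀ v ∈ G.verts, ((u, v) ∈ G.edges ↔ (φ u, φ v) ∈ H.edges)

end DGraph

namespace DGraph
open Relation

variable {V : Type u}

lemma mem_zipTail_iff {l : List V} {e : V × V} :
    e ∈ l.zip l.tail ↔ ∃ i : ℕ, ∃ h : i + 1 < l.length, l[i] = e.1 ∧ l[i+1] = e.2 := by
  constructor
  · intro h
    obtain ⟨i, hi, he⟩ := List.mem_iff_getElem.mp h
    have hi' : i + 1 < l.length := by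
      simp only [List.length_zip, List.length_tail, lt_min_iff] at hi; omega
    rw [List.getElem_zip, List.getElem_tail] at he
    exact ⟨i, hi', by rw [← he], by rw [← he]⟩
  · rintro ⟨i, h, h1, h2⟩
    refine List.mem_iff_getElem.mpr ⟨i, ?_, ?_⟩
    · simp only [List.length_zip, List.length_tail, lt_min_iff]; omega
    · rw [List.getElem_zip, List.getElem_tail, h1, h2]

lemma mem_of_mem_zipTail {l : List V} {e : V × V} (h : e ∈ l.zip l.tail) :
    e.1 ∈ l ∧ e.2 ∈ l := by
  obtain ⟨i, hi, h1, h2⟩ := mem_zipTail_iff.mp h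
  exact ⟨h1 ▸ List.getElem_mem _, h2 ▸ List.getElem_mem _⟩

lemma mem_zipTail_reverse {l : List V} {e : V × V} :
    e ∈ l.reverse.zip l.reverse.tail ↔ (e.2, e.1) ∈ l.zip l.tail := by
  constructor
  · intro h
    obtain ⟨i, hi, h1, h2⟩ := mem_zipTail_iff.mp h
    simp only [List.length_reverse] at hi
    rw [List.getElem_reverse] at h1 h2
    refine mem_zipTail_iff.mpr ⟨l.length - 1 - (i+1), by omega, h2, ?_⟩
    have : l.length - 1 - (i + 1) + 1 = l.length - 1 - i := by omega
    simp only [this]; exact h1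
  · intro h
    obtain ⟨i, hi, h1, h2⟩ := mem_zipTail_iff.mp h
    refine mem_zipTail_iff.mpr ⟨l.length - 1 - (i+1),
      by simpa using (by omega : l.length - 1 - (i+1) + 1 < l.length), ?_, ?_⟩
    · rw [List.getElem_reverse]
      have : l.length - 1 - (l.length - 1 - (i + 1)) = i + 1 := by omega
      simp only [this]; exact h2
    · rw [List.getElem_reverse]
      have : l.length - 1 - (l.length - 1 - (i + 1) + 1) = i := by omega
      simp only [this]; exact h1

lemma zipTail_succ_unique {l : List V} (hl : l.Nodup) {a b c : V}
    (hb : (a, b) ∈ l.zip l.tail) (hc : (a, c) ∈ l.zip l.tail) : b = c := by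
  obtain ⟨i, hi, h1, h2⟩ := mem_zipTail_iff.mp hb
  obtain ⟨j, hj, g1, g2⟩ := mem_zipTail_iff.mp hc
  have hij : i = j := hl.getElem_inj_iff.mp (h1.trans g1.symm)
  subst hij
  exact h2.symm.trans g2

lemma getLast_no_succ {l : List V} (hl : l.Nodup) {a b : V}
    (hlast : l.getLast? = some a) : (a, b) ∉ l.zip l.tail := by
  intro h
  obtain ⟨i, hi, h1, h2⟩ := mem_zipTail_iff.mp h
  have hne : l ≠ [] := by rintro rfl; simp at hlast
  rw [List.getLast?_eq_getLast hne, List.getLast_eq_getElem] at hlast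
  have ha := Option.some_injective _ hlast
  have : i = l.length - 1 := hl.getElem_inj_iff.mp (h1.trans ha.symm)
  omega

lemma succ_exists_of_ne_getLast {l : List V} {x : V} (hx : x ∈ l) {b : V}
    (hlast : l.getLast? = some b) (hne : x ≠ b) :
    ∃ y, (x, y) ∈ l.zip l.tail := by
  obtain ⟨i, hi, rfl⟩ := List.mem_iff_getElem.mp hx
  have hne' : l ≠ [] := by rintro rfl; simp at hlast
  rw [List.getLast?_eq_getLast hne', List.getLast_eq_getElem] at hlast
  have hb := Option.some_injective _ hlast
  have hii : i ≠ l.length - 1 := by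
    intro h; subst h; exact hne hb
  have hi1 : i + 1 < l.length := by omega
  exact ⟨l[i+1], mem_zipTail_iff.mpr ⟨i, hi1, rfl, rfl⟩⟩

lemma head_succ_mem {l : List V} {a : V} (hh : l.head? = some a) (h2 : 2 ≤ l.length) :
    (a, l[1]) ∈ l.zip l.tail := by
  refine mem_zipTail_iff.mpr ⟨0, by omega, ?_, rfl⟩
  cases l with
  | nil => simp at hh
  | cons x t => simpa using hh

end DGraph

namespace DGraph
open Relation

variable {V : Type u}

lemma isPath_tail {G : DGraph V} {a : V} {l : List V}
    (h : IsPath G (a :: l)) (hl : l ≠ []) : IsPath G l := by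
  obtain ⟨-, hnd, hv, he⟩ := h
  refine ⟨hl, hnd.of_cons, fun v hv' => hv v (List.mem_cons_of_mem _ hv'), fun e he' => ?_⟩
  apply he
  obtain ⟨i, hi, h1, h2⟩ := mem_zipTail_iff.mp he'
  refine mem_zipTail_iff.mpr ⟨i + 1, by simpa using hi, by simpa using h1, by simpa using h2⟩

lemma isPath_suffix {G : DGraph V} {l₁ l₂ : List V}
    (h : IsPath G (l₁ ++ l₂)) (hl : l₂ ≠ []) : IsPath G l₂ := by
  induction l₁ with
  | nil => simpa using h
  | cons a t ih =>
    apply ih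
    exact isPath_tail (by simpa using h) (by simp [hl])

lemma reaches_refl {G : DGraph V} {a : V} (h : a ∈ G.verts) : Reaches G a a :=
  ⟨[a], ⟨by simp, by simp, by simpa, by simp⟩, by simp, by simp⟩

lemma reaches_mono {H G : DGraph V} (hHG : H ⊆ G) {a b : V} (h : Reaches H a b) :
    Reaches G a b := by
  obtain ⟨l, ⟨h1, h2, h3, h4⟩, h5, h6⟩ := h
  exact ⟨l, ⟨h1, h2, fun v hv => hHG.1 (h3 v hv), fun e he => hHG.2 (h4 e he)⟩, h5, h6⟩

lemma reaches_suffix {G : DGraph V} {c b a : V} {l : List V}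
    (hp : IsPathFrom G c b l) (ha : a ∈ l) : Reaches G a b := by
  obtain ⟨hpath, hh, hlast⟩ := hp
  obtain ⟨s, t, rfl⟩ := List.append_of_mem ha
  refine ⟨a :: t, isPath_suffix hpath (by simp), by simp, ?_⟩
  rw [← hlast, List.getLast?_append_of_ne_nil s (by simp)]

/-- The step relation of a digraph. -/
def Rel (G : DGraph V) (a b : V) : Prop :=
  (a, b) ∈ G.edges ∧ a ∈ G.verts ∧ b ∈ G.verts

lemma reaches_of_rtg {G : DGraph V} {a b : V} (h : ReflTransGen (Rel G) a b)
    (ha : a ∈ G.verts) : Reaches G a b := by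
  induction h using ReflTransGen.head_induction_on with
  | refl => exact reaches_refl ha
  | @head x c hxc hcb ih =>
    obtain ⟨he, hx, hc⟩ := hxc
    obtain ⟨l, hp, hh, hlast⟩ := ih hc
    by_cases hmem : x ∈ l
    · exact reaches_suffix ⟨hp, hh, hlast⟩ hmem
    · obtain ⟨hne, hnd, hv, hedges⟩ := hp
      obtain ⟨y, t, rfl⟩ : ∃ y t, l = y :: t := by
        cases l with | nil => simp at hne | cons y t => exact ⟨y, t, rfl⟩
      have hy : y = c := by simpa using hh
      subst hy
      refine ⟨x :: y :: t, ⟨by simp, List.nodup_cons.mpr ⟨hmem, hnd⟩, ?_, ?_⟩, by simp,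
        by simpa using hlast⟩
      · intro v hv'
        rcases List.mem_cons.mp hv' with rfl | hv' 
        · exact hx
        · exact hv v hv'
      · intro e he'
        rcases List.mem_cons.mp (by simpa using he') with rfl | he''
        · exact he
        · exact hedges e he''

lemma rtg_of_reaches {G : DGraph V} {a b : V} (h : Reaches G a b) :
    ReflTransGen (Rel G) a b ∧ a ∈ G.verts ∧ b ∈ G.verts := by
  obtain ⟨l, hp, hh, hlast⟩ := h
  induction l generalizing a with
  | nil => simp at hh
  | cons y t ih =>
    have hy : y = a := by simpa using hh
    subst hy
    have hyv : y ∈ G.verts := hp.2.2.1 y (by simp)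
    cases t with
    | nil =>
      have : y = b := by simpa using hlast
      subst this
      exact ⟨ReflTransGen.refl, hyv, hyv⟩
    | cons c t' =>
      have hcv : c ∈ G.verts := hp.2.2.1 c (by simp)
      have hedge : (y, c) ∈ G.edges := by
        apply hp.2.2.2
        simp
      have hp' : IsPathFrom G c b (c :: t') :=
        ⟨isPath_tail hp (by simp), by simp, by simpa using hlast⟩
      obtain ⟨hr, -, hbv⟩ := ih hp'.1 hp'.2.1 hp'.2.2
      exact ⟨ReflTransGen.head ⟨hedge, hyv, hcv⟩ hr, hyv, hbv⟩

lemma reaches_trans {G : DGraph V} {a b c : V} (h1 : Reaches G a b) (h2 : Reaches G b c) :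
    Reaches G a c := by
  obtain ⟨r1, ha, -⟩ := rtg_of_reaches h1
  obtain ⟨r2, -, -⟩ := rtg_of_reaches h2
  exact reaches_of_rtg (r1.trans r2) ha

lemma reaches_single {G : DGraph V} {a b : V} (h : (a, b) ∈ G.edges)
    (ha : a ∈ G.verts) (hb : b ∈ G.verts) : Reaches G a b :=
  reaches_of_rtg (ReflTransGen.single ⟨h, ha, hb⟩) ha

lemma reaches_of_reverse {G : DGraph V} {a b : V} (h : Reaches G.reverse b a) :
    Reaches G a b := by
  obtain ⟨l, ⟨hne, hnd, hv, he⟩, hh, hlast⟩ := h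
  refine ⟨l.reverse, ⟨by simpa using hne, by simpa using hnd, ?_, ?_⟩, ?_, ?_⟩
  · intro v hv'; exact hv v (by simpa using hv')
  · intro e he'
    have := he (e.2, e.1) (mem_zipTail_reverse.mp (by simpa using he'))
    simpa [reverse] using this
  · rw [List.head?_reverse]; exact hlast
  · rw [List.getLast?_reverse]; exact hh

end DGraph

namespace DGraph
open Relation

variable {V : Type u}

lemma union_verts (G H : DGraph V) : (G ∪ H).verts = G.verts ∪ H.verts := rfl
lemma union_edges (G H : DGraph V) : (G ∪ H).edges = G.edges ∪ H.edges := rfl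
lemma ofList_verts (l : List V) : (ofList l).verts = {v | v ∈ l} := rfl
lemma ofList_edges (l : List V) : (ofList l).edges = {e | e ∈ l.zip l.tail} := rfl

lemma left_sub_union (G H : DGraph V) : G ⊆ G ∪ H :=
  ⟨fun _ h => Or.inl h, fun _ h => Or.inl h⟩
lemma right_sub_union (G H : DGraph V) : H ⊆ G ∪ H :=
  ⟨fun _ h => Or.inr h, fun _ h => Or.inr h⟩
lemma union_sub {G H K : DGraph V} (h1 : G ⊆ K) (h2 : H ⊆ K) : G ∪ H ⊆ K :=
  ⟨fun _ h => h.elim (fun h => h1.1 h) (fun h => h2.1 h),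
   fun _ h => h.elim (fun h => h1.2 h) (fun h => h2.2 h)⟩
lemma sub_trans {G H K : DGraph V} (h1 : G ⊆ H) (h2 : H ⊆ K) : G ⊆ K :=
  ⟨fun _ h => h2.1 (h1.1 h), fun _ h => h2.2 (h1.2 h)⟩

lemma reverse_reverse' (G : DGraph V) : G.reverse.reverse = G := by
  cases G with
  | mk vs es =>
    simp only [reverse]
    have h : {e : V × V | (e.2, e.1) ∈ {e : V × V | (e.2, e.1) ∈ es}} = es := by
      ext ⟨a, b⟩
      simp
    rw [h]

lemma reverse_sub_reverse {G H : DGraph V} (h : G ⊆ H) : G.reverse ⊆ H.reverse :=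
  ⟨h.1, fun _ he => h.2 he⟩

lemma reverse_sub_of_sub_reverse {G H : DGraph V} (h : G ⊆ H.reverse) : G.reverse ⊆ H := by
  have := reverse_sub_reverse h
  rwa [reverse_reverse'] at this

lemma union_comm' (G H : DGraph V) : G ∪ H = H ∪ G := by
  show (⟨_, _⟩ : DGraph V) = ⟨_, _⟩
  rw [Set.union_comm, Set.union_comm G.edges]

lemma reverse_union (G H : DGraph V) : (G ∪ H).reverse = G.reverse ∪ H.reverse := rfl

/-- Extending an in-arborescence rooted at `w` by a directed path from `w` to `t`
(meeting the arborescence only in `w`) gives an in-arborescence rooted at `t`. -/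
lemma inArb_extend {T : DGraph V} {w t : V} (hT : IsInArborescence T w)
    {l : List V} (hnd : l.Nodup) (hh : l.head? = some w) (hlast : l.getLast? = some t)
    (hint : ∀ x ∈ l, x ∈ T.verts → x = w) :
    IsInArborescence (T ∪ ofList l) t := by
  have hlne : l ≠ [] := by rintro rfl; simp at hh
  have hwl : w ∈ l := by
    cases l with
    | nil => simp at hh
    | cons a tl => simp_all
  have htl : t ∈ l := by
    have := List.getLast?_eq_getLast hlne
    rw [this] at hlast
    exact (Option.some_injective _ hlast) ▸ List.getLast_mem hlne
  have hpl : IsPathFrom (ofList l) w t l :=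
    ⟨⟨hlne, hnd, fun v hv => hv, fun e he => he⟩, hh, hlast⟩
  refine ⟨Or.inr htl, ?_, ?_, ?_, ?_⟩
  · rintro e (he | he)
    · exact ⟨Or.inl (hT.2.1 e he).1, Or.inl (hT.2.1 e he).2⟩
    · exact ⟨Or.inr (mem_of_mem_zipTail he).1, Or.inr (mem_of_mem_zipTail he).2⟩
  · rintro z (hz | hz)
    · have : t ∈ T.verts := (hT.2.1 _ hz).1
      have := hint t htl this
      subst this
      exact hT.2.2.1 z hz
    · exact getLast_no_succ hnd hlast hz
  · rintro x (hx | hx) hxt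
    · by_cases hxl : x ∈ l
      · -- x = w, since x is in l and in T
        have hxw := hint x hxl hx
        subst hxw
        obtain ⟨y, hy⟩ := succ_exists_of_ne_getLast hxl hlast hxt
        refine ⟨y, Or.inr hy, ?_⟩
        rintro z (hz | hz)
        · exact absurd hz (hT.2.2.1 z)
        · exact zipTail_succ_unique hnd hz hy
      · have hxw : x ≠ w := fun h => hxl (h ▸ hwl)
        obtain ⟨y, hy, hyu⟩ := hT.2.2.2.1 x hx hxw
        refine ⟨y, Or.inl hy, ?_⟩
        rintro z (hz | hz)
        · exact hyu z hz
        · exact absurd (mem_of_mem_zipTail hz).1 hxl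
    · -- x ∈ l
      obtain ⟨y, hy⟩ := succ_exists_of_ne_getLast hx hlast hxt
      refine ⟨y, Or.inr hy, ?_⟩
      rintro z (hz | hz)
      · have : x ∈ T.verts := (hT.2.1 _ hz).1
        have hxw := hint x hx this
        subst hxw
        exact absurd hz (hT.2.2.1 z)
      · exact zipTail_succ_unique hnd hz hy
  · rintro x (hx | hx)
    · refine reaches_trans (reaches_mono (left_sub_union T (ofList l)) (hT.2.2.2.2 x hx)) ?_
      exact reaches_mono (right_sub_union T (ofList l)) (reaches_suffix hpl hwl)
    · exact reaches_mono (right_sub_union T (ofList l)) (reaches_suffix hpl hx)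

lemma iterate_parent {T : DGraph V} {r : V} (hT : IsInArborescence T r) (par : V → V)
    (hpar : ∀ w ∈ T.verts, w ≠ r → (w, par w) ∈ T.edges) :
    ∀ w ∈ T.verts, ∃ n, par^[n] w = r := by
  suffices aux : ∀ (l : List V) (w : V), IsPathFrom T w r l → ∃ n, par^[n] w = r by
    intro w hw
    obtain ⟨l, hp⟩ := hT.2.2.2.2 w hw
    exact aux l w hp
  intro l
  induction l with
  | nil => exact fun w h => absurd rfl h.1.1
  | cons a tl ih =>
    rintro w ⟨hp, hh, hlast⟩
    have ha : a = w := by simpa using hh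
    subst ha
    by_cases hwr : a = r
    · exact ⟨0, hwr⟩
    · cases tl with
      | nil => exact absurd (by simpa using hlast) hwr
      | cons b tl' =>
        have hedge : (a, b) ∈ T.edges := hp.2.2.2 (a, b) (by simp)
        have hav : a ∈ T.verts := hp.2.2.1 a (by simp)
        have hb : b = par a :=
          (hT.2.2.2.1 a hav hwr).unique hedge (hpar a hav hwr)
        obtain ⟨n, hn⟩ := ih b ⟨isPath_tail hp (by simp), by simp, by simpa using hlast⟩
        exact ⟨n + 1, by rw [Function.iterate_succ_apply, ← hb, hn]⟩

/-- Gluing disjoint in-arborescences along a tree structure yields an in-arborescence. -/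
lemma glue_inArb (S : Set V) (r : V) (hr : r ∈ S) (par : V → V) (P : V → DGraph V)
    (ex en : V → V)
    (hiter : ∀ w ∈ S, ∃ n, par^[n] w = r)
    (hparS : ∀ w ∈ S, w ≠ r → par w ∈ S)
    (harb : ∀ w ∈ S, IsInArborescence (P w) (ex w))
    (hdisj : ∀ w ∈ S, ∀ w' ∈ S, w ≠ w' → (P w).verts ∩ (P w').verts = ∅)
    (hen : ∀ w ∈ S, w ≠ r → en w ∈ (P (par w)).verts) :
    IsInArborescence
      ⟨⋃ w ∈ S, (P w).verts,
       (⋃ w ∈ S, (P w).edges) ∪ {e | ∃ w ∈ S, w ≠ r ∧ e = (ex w, en w)}⟩ (ex r) := by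
  set U : DGraph V :=
    ⟨⋃ w ∈ S, (P w).verts,
     (⋃ w ∈ S, (P w).edges) ∪ {e | ∃ w ∈ S, w ≠ r ∧ e = (ex w, en w)}⟩ with hU
  have hkey : ∀ w ∈ S, ∀ w' ∈ S, ∀ x, x ∈ (P w).verts → x ∈ (P w').verts → w = w' := by
    intro w hw w' hw' x h1 h2
    by_contra hne
    exact absurd (Set.mem_inter h1 h2) (by rw [hdisj w hw w' hw' hne]; simp)
  have hexw : ∀ w ∈ S, ex w ∈ (P w).verts := fun w hw => (harb w hw).1
  have hsub : ∀ w ∈ S, P w ⊆ U := by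
    intro w hw
    exact ⟨fun x hx => Set.mem_iUnion₂.mpr ⟨w, hw, hx⟩,
           fun e he => Or.inl (Set.mem_iUnion₂.mpr ⟨w, hw, he⟩)⟩
  refine ⟨Set.mem_iUnion₂.mpr ⟨r, hr, hexw r hr⟩, ?_, ?_, ?_, ?_⟩
  · rintro e (he | he)
    · obtain ⟨w, hw, he⟩ := Set.mem_iUnion₂.mp he
      exact ⟨(hsub w hw).1 ((harb w hw).2.1 e he).1, (hsub w hw).1 ((harb w hw).2.1 e he).2⟩
    · obtain ⟨w, hw, hwr, rfl⟩ := he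
      exact ⟨(hsub w hw).1 (hexw w hw), (hsub (par w) (hparS w hw hwr)).1 (hen w hw hwr)⟩
  · rintro z (hz | hz)
    · obtain ⟨w, hw, hz⟩ := Set.mem_iUnion₂.mp hz
      have : ex r ∈ (P w).verts := ((harb w hw).2.1 _ hz).1
      have := hkey w hw r hr (ex r) this (hexw r hr)
      subst this
      exact absurd hz ((harb w hw).2.2.1 z)
    · obtain ⟨w, hw, hwr, he⟩ := hz
      have h1 : ex r = ex w := congrArg Prod.fst he
      exact hwr (hkey w hw r hr (ex w) (hexw w hw) (h1 ▸ hexw r hr))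
  · intro x hx hxr
    obtain ⟨w, hw, hxw⟩ := Set.mem_iUnion₂.mp hx
    by_cases hxe : x = ex w
    · have hwr : w ≠ r := by
        rintro rfl; exact hxr hxe
      refine ⟨en w, Or.inr ⟨w, hw, hwr, by rw [hxe]⟩, ?_⟩
      rintro z (hz | hz)
      · obtain ⟨w', hw', hz⟩ := Set.mem_iUnion₂.mp hz
        have hxw' : x ∈ (P w').verts := ((harb w' hw').2.1 _ hz).1
        have := hkey w' hw' w hw x hxw' hxw
        subst this
        rw [hxe] at hz
        exact absurd hz ((harb w' hw').2.2.1 z)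
      · obtain ⟨w'', hw'', hwr'', he⟩ := hz
        have h1 : x = ex w'' := congrArg Prod.fst he
        have h2 : z = en w'' := congrArg Prod.snd he
        have : w'' = w := hkey w'' hw'' w hw x (h1 ▸ hexw w'' hw'') hxw
        rw [h2, this]
    · obtain ⟨y, hy, hyu⟩ := (harb w hw).2.2.2.1 x hxw hxe
      refine ⟨y, Or.inl (Set.mem_iUnion₂.mpr ⟨w, hw, hy⟩), ?_⟩
      rintro z (hz | hz)
      · obtain ⟨w', hw', hz⟩ := Set.mem_iUnion₂.mp hz
        have hxw' : x ∈ (P w').verts := ((harb w' hw').2.1 _ hz).1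
        have := hkey w' hw' w hw x hxw' hxw
        subst this
        exact hyu z hz
      · obtain ⟨w'', hw'', hwr'', he⟩ := hz
        have h1 : x = ex w'' := congrArg Prod.fst he
        have : w'' = w := hkey w'' hw'' w hw x (h1 ▸ hexw w'' hw'') hxw
        exact absurd (this ▸ h1) hxe
  · have claim : ∀ n, ∀ w ∈ S, par^[n] w = r → ∀ x ∈ (P w).verts, Reaches U x (ex r) := by
      intro n
      induction n with
      | zero =>
        intro w hw hwr x hx
        subst hwr
        exact reaches_mono (hsub w hw) ((harb w hw).2.2.2.2 x hx)
      | succ n ihn =>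
        intro w hw hwr x hx
        by_cases hwr' : w = r
        · subst hwr'
          exact reaches_mono (hsub w hw) ((harb w hw).2.2.2.2 x hx)
        · have r1 : Reaches U x (ex w) :=
            reaches_mono (hsub w hw) ((harb w hw).2.2.2.2 x hx)
          have hpw : par w ∈ S := hparS w hw hwr'
          have r2 : Reaches U (ex w) (en w) :=
            reaches_single (Or.inr ⟨w, hw, hwr', rfl⟩)
              ((hsub w hw).1 (hexw w hw)) ((hsub (par w) hpw).1 (hen w hw hwr'))
          have r3 : Reaches U (en w) (ex r) :=
            ihn (par w) hpw (by rwa [Function.iterate_succ_apply] at hwr) (en w)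
              (hen w hw hwr')
          exact reaches_trans r1 (reaches_trans r2 r3)
    intro x hx
    obtain ⟨w, hw, hxw⟩ := Set.mem_iUnion₂.mp hx
    obtain ⟨n, hn⟩ := hiter w hw
    exact claim n w hw hn x hxw

end DGraph

namespace DGraph
open Relation

variable {V : Type u}

lemma reverse_verts (G : DGraph V) : G.reverse.verts = G.verts := rfl

/-- Composing the in-arborescence of `M₁` at `v` with the model `M₂`. -/
lemma compose_tin {D₁ D₂ D₃ : DGraph V} (M₁ : TreeLikeModel D₂ D₁) (M₂ : TreeLikeModel D₃ D₂)
    (v : V) (hv : v ∈ D₁.verts) :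
    ∃ T : DGraph V,
      IsInArborescence T v ∧ T ⊆ D₃ ∧
      T.verts ⊆ (⋃ w ∈ (M₁.tin v).verts, (M₂.bag w).verts) ∧
      (∀ w ∈ (M₁.tin v).verts, (M₂.tin w).verts ⊆ T.verts) ∧
      T.verts ∩ (M₂.bag v).verts ⊆ (M₂.tin v).verts := by
  classical
  have hbag1 := M₁.bag_eq v hv
  have hT1 := M₁.tin_arb v hv
  have hsubD2 : M₁.bag v ⊆ D₂ := M₁.bag_sub v hv
  set S := (M₁.tin v).verts with hS
  have hvS : v ∈ S := hT1.1
  have hSD2 : ∀ w ∈ S, w ∈ D₂.verts := fun w hw =>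
    hsubD2.1 (by rw [hbag1]; exact Or.inl hw)
  have hedgeD2 : ∀ e ∈ (M₁.tin v).edges, e ∈ D₂.edges := fun e he =>
    hsubD2.2 (by rw [hbag1]; exact Or.inl he)
  -- parent function
  have hpar_ex : ∀ w, ∃ p, w ∈ S → w ≠ v → (w, p) ∈ (M₁.tin v).edges := by
    intro w
    by_cases h : w ∈ S ∧ w ≠ v
    · obtain ⟨p, hp, -⟩ := hT1.2.2.2.1 w h.1 h.2
      exact ⟨p, fun _ _ => hp⟩
    · exact ⟨v, fun h1 h2 => absurd ⟨h1, h2⟩ h⟩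
  choose par hpar using hpar_ex
  have hparS : ∀ w ∈ S, w ≠ v → par w ∈ S :=
    fun w hw hne => (hT1.2.1 _ (hpar w hw hne)).2
  have hiter := iterate_parent hT1 par hpar
  have hparE : ∀ w ∈ S, w ≠ v → (w, par w) ∈ D₂.edges :=
    fun w hw hne => hedgeD2 _ (hpar w hw hne)
  -- connecting paths inside the out-arborescences of M₂
  have hpath_ex : ∀ w, ∃ l : List V, w ∈ S → w ≠ v →
      IsPathFrom (M₂.tout w) w ((M₂.emap (w, par w)).1) l := by
    intro w
    by_cases h : w ∈ S ∧ w ≠ v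
    · have ho := M₂.tout_arb w (hSD2 w h.1)
      have htw : (M₂.emap (w, par w)).1 ∈ (M₂.tout w).verts :=
        M₂.emap_tail (w, par w) (hparE w h.1 h.2)
      have : Reaches (M₂.tout w).reverse ((M₂.emap (w, par w)).1) w :=
        ho.2.2.2.2 _ htw
      obtain ⟨l, hl⟩ := reaches_of_reverse this
      exact ⟨l, fun _ _ => hl⟩
    · exact ⟨[], fun h1 h2 => absurd ⟨h1, h2⟩ h⟩
  choose pl hpl using hpath_ex
  set P : V → DGraph V :=
    fun w => if w = v then M₂.tin v else M₂.tin w ∪ ofList (pl w) with hP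
  set ex : V → V := fun w => if w = v then v else (M₂.emap (w, par w)).1 with hex
  set en : V → V := fun w => (M₂.emap (w, par w)).2 with hen
  have hexv : ex v = v := by simp [hex]
  have hPv : P v = M₂.tin v := by simp [hP]
  have hPw : ∀ w, w ≠ v → P w = M₂.tin w ∪ ofList (pl w) := fun w h => by simp [hP, h]
  have hexw : ∀ w, w ≠ v → ex w = (M₂.emap (w, par w)).1 := fun w h => by simp [hex, h]
  -- each piece is contained in the corresponding bag of M₂
  have hPbag : ∀ w ∈ S, (P w).verts ⊆ (M₂.bag w).verts := by
    intro w hw x hx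
    rw [M₂.bag_eq w (hSD2 w hw), union_verts]
    by_cases hne : w = v
    · subst hne; rw [hPv] at hx; exact Or.inl hx
    · rw [hPw w hne, union_verts] at hx
      rcases hx with hx | hx
      · exact Or.inl hx
      · exact Or.inr ((hpl w hw hne).1.2.2.1 x hx)
  have htinP : ∀ w, (M₂.tin w).verts ⊆ (P w).verts := by
    intro w x hx
    by_cases hne : w = v
    · subst hne; rwa [hPv]
    · rw [hPw w hne, union_verts]; exact Or.inl hx
  -- hypotheses of the gluing lemma
  have harb : ∀ w ∈ S, IsInArborescence (P w) (ex w) := by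
    intro w hw
    by_cases hne : w = v
    · subst hne; rw [hPv, hexv]; exact M₂.tin_arb w (hSD2 w hw)
    · rw [hPw w hne, hexw w hne]
      obtain ⟨⟨hlne, hnd, hverts, hedges⟩, hh, hlast⟩ := hpl w hw hne
      refine inArb_extend (M₂.tin_arb w (hSD2 w hw)) hnd hh hlast ?_
      intro x hx hx2
      have hx3 : x ∈ (M₂.tout w).verts := hverts x hx
      have : x ∈ (M₂.tin w).verts ∩ (M₂.tout w).verts := ⟨hx2, hx3⟩
      rw [M₂.roots_eq w (hSD2 w hw)] at this
      exact this
  have hdisj : ∀ w ∈ S, ∀ w' ∈ S, w ≠ w' → (P w).verts ∩ (P w').verts = ∅ := by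
    intro w hw w' hw' hne
    rw [Set.eq_empty_iff_forall_notMem]
    intro x ⟨h1, h2⟩
    have := M₂.bag_disjoint w (hSD2 w hw) w' (hSD2 w' hw') hne
    exact absurd (Set.mem_inter (hPbag w hw h1) (hPbag w' hw' h2))
      (by rw [this]; simp)
  have henP : ∀ w ∈ S, w ≠ v → en w ∈ (P (par w)).verts := by
    intro w hw hne
    have := M₂.emap_head (w, par w) (hparE w hw hne)
    exact htinP (par w) this
  have hglue := glue_inArb S v hvS par P ex en hiter hparS harb hdisj henP
  rw [hexv] at hglue
  refine ⟨_, hglue, ?_, ?_, ?_, ?_⟩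
  · -- contained in D₃
    constructor
    · intro x hx
      obtain ⟨w, hw, hxw⟩ := Set.mem_iUnion₂.mp hx
      exact (M₂.bag_sub w (hSD2 w hw)).1 (hPbag w hw hxw)
    · rintro e (he | he)
      · obtain ⟨w, hw, he⟩ := Set.mem_iUnion₂.mp he
        apply (M₂.bag_sub w (hSD2 w hw)).2
        rw [M₂.bag_eq w (hSD2 w hw), union_edges]
        by_cases hne : w = v
        · subst hne; rw [hPv] at he; exact Or.inl he
        · rw [hPw w hne, union_edges] at he
          rcases he with he | he
          · exact Or.inl he
          · exact Or.inr ((hpl w hw hne).1.2.2.2 e he)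
      · obtain ⟨w, hw, hne, rfl⟩ := he
        rw [hexw w hne]
        have := M₂.emap_mem (w, par w) (hparE w hw hne)
        simpa [hen] using this
  · -- vertex set covered by bags
    intro x hx
    obtain ⟨w, hw, hxw⟩ := Set.mem_iUnion₂.mp hx
    exact Set.mem_iUnion₂.mpr ⟨w, hw, hPbag w hw hxw⟩
  · -- contains the in-arborescences of M₂
    intro w hw x hx
    exact Set.mem_iUnion₂.mpr ⟨w, hw, htinP w hx⟩
  · -- meets the bag of v only inside M₂.tin v
    rintro x ⟨hx, hxv⟩
    obtain ⟨w, hw, hxw⟩ := Set.mem_iUnion₂.mp hx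
    by_cases hne : w = v
    · subst hne; rwa [hPv] at hxw
    · have := M₂.bag_disjoint w (hSD2 w hw) v (hSD2 v hvS) hne
      exact absurd (Set.mem_inter (hPbag w hw hxw) hxv) (by rw [this]; simp)

end DGraph

namespace DGraph
open Relation

variable {V : Type u}

/-- Reversing a tree-like model. -/
def TreeLikeModel.rev {D H : DGraph V} (M : TreeLikeModel D H) :
    TreeLikeModel D.reverse H.reverse where
  bag v := (M.bag v).reverse
  tin v := (M.tout v).reverse
  tout v := (M.tin v).reverse
  emap e := (M.emap (e.2, e.1)).swap
  bag_sub v hv := reverse_sub_reverse (M.bag_sub v hv)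
  bag_disjoint v hv w hw hne := M.bag_disjoint v hv w hw hne
  bag_eq v hv := by
    show (M.bag v).reverse = (M.tout v).reverse ∪ (M.tin v).reverse
    rw [M.bag_eq v hv, reverse_union, union_comm']
  tin_arb v hv := M.tout_arb v hv
  tout_arb v hv := by
    show IsInArborescence (M.tin v).reverse.reverse v
    rw [reverse_reverse']
    exact M.tin_arb v hv
  roots_eq v hv := by
    show (M.tout v).verts ∩ (M.tin v).verts = {v}
    rw [Set.inter_comm]
    exact M.roots_eq v hv
  emap_mem e he := by
    have h1 : (e.2, e.1) ∈ H.edges := he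
    have h2 := M.emap_mem _ h1
    show ((M.emap (e.2, e.1)).swap.2, (M.emap (e.2, e.1)).swap.1) ∈ D.edges
    simpa using h2
  emap_tail e he := M.emap_head (e.2, e.1) he
  emap_head e he := M.emap_tail (e.2, e.1) he

end DGraph

open DGraph in
theorem butterflyMinor_trans' {V : Type u} (D₁ D₂ D₃ : DGraph V)
    (h₁₂ : D₂.IsButterflyMinor D₁) (h₂₃ : D₃.IsButterflyMinor D₂) :
    D₃.IsButterflyMinor D₁ := by
  classical
  obtain ⟨M₁⟩ := h₁₂
  obtain ⟨M₂⟩ := h₂₃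
  have keyIn : ∀ x : V, ∃ T : DGraph V,
      (x ∈ D₁.verts →
        IsInArborescence T x ∧ T ⊆ D₃ ∧
        T.verts ⊆ (⋃ w ∈ (M₁.tin x).verts, (M₂.bag w).verts) ∧
        (∀ w ∈ (M₁.tin x).verts, (M₂.tin w).verts ⊆ T.verts) ∧
        T.verts ∩ (M₂.bag x).verts ⊆ (M₂.tin x).verts) ∧
      (x ∉ D₁.verts → T.verts = Set.univ) := by
    intro x
    by_cases hx : x ∈ D₁.verts
    · obtain ⟨T, h⟩ := compose_tin M₁ M₂ x hx
      exact ⟨T, fun _ => h, fun h' => absurd hx h'⟩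
    · exact ⟨⟨Set.univ, ∅⟩, fun h' => absurd h' hx, fun _ => rfl⟩
  choose tin htin htinU using keyIn
  have keyOut : ∀ x : V, ∃ T : DGraph V,
      (x ∈ D₁.verts →
        IsInArborescence T x ∧ T ⊆ D₃.reverse ∧
        T.verts ⊆ (⋃ w ∈ (M₁.rev.tin x).verts, (M₂.rev.bag w).verts) ∧
        (∀ w ∈ (M₁.rev.tin x).verts, (M₂.rev.tin w).verts ⊆ T.verts) ∧
        T.verts ∩ (M₂.rev.bag x).verts ⊆ (M₂.rev.tin x).verts) ∧
      (x ∉ D₁.verts → T.verts = Set.univ) := by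
    intro x
    by_cases hx : x ∈ D₁.verts
    · obtain ⟨T, h⟩ := compose_tin M₁.rev M₂.rev x hx
      exact ⟨T, fun _ => h, fun h' => absurd hx h'⟩
    · exact ⟨⟨Set.univ, ∅⟩, fun h' => absurd h' hx, fun _ => rfl⟩
  choose tout0 htout htoutU using keyOut
  -- coverage of vertex sets by M₂-bags indexed over the M₁-bag
  have hcovIn : ∀ x ∈ D₁.verts, (tin x).verts ⊆
      ⋃ u ∈ (M₁.bag x).verts, (M₂.bag u).verts := by
    intro x hx y hy
    obtain ⟨u, hu, hyu⟩ := Set.mem_iUnion₂.mp ((htin x hx).2.2.1 hy)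
    refine Set.mem_iUnion₂.mpr ⟨u, ?_, hyu⟩
    rw [M₁.bag_eq x hx, union_verts]
    exact Or.inl hu
  have hcovOut : ∀ x ∈ D₁.verts, (tout0 x).verts ⊆
      ⋃ u ∈ (M₁.bag x).verts, (M₂.bag u).verts := by
    intro x hx y hy
    obtain ⟨u, hu, hyu⟩ := Set.mem_iUnion₂.mp ((htout x hx).2.2.1 hy)
    refine Set.mem_iUnion₂.mpr ⟨u, ?_, hyu⟩
    rw [M₁.bag_eq x hx, union_verts]
    exact Or.inr hu
  have hbagD2 : ∀ x ∈ D₁.verts, ∀ u ∈ (M₁.bag x).verts, u ∈ D₂.verts :=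
    fun x hx u hu => (M₁.bag_sub x hx).1 hu
  refine ⟨⟨fun x => tin x ∪ (tout0 x).reverse, tin, fun x => (tout0 x).reverse,
    fun e => M₂.emap (M₁.emap e), ?_, ?_, ?_, ?_, ?_, ?_, ?_, ?_, ?_⟩⟩
  · -- bag_sub
    intro x hx
    exact union_sub ((htin x hx).2.1) (reverse_sub_of_sub_reverse ((htout x hx).2.1))
  · -- bag_disjoint
    intro x hx y hy hne
    rw [Set.eq_empty_iff_forall_notMem]
    rintro z ⟨hzx, hzy⟩
    have hx' : z ∈ ⋃ u ∈ (M₁.bag x).verts, (M₂.bag u).verts := by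
      rcases hzx with h | h
      · exact hcovIn x hx h
      · exact hcovOut x hx h
    have hy' : z ∈ ⋃ u ∈ (M₁.bag y).verts, (M₂.bag u).verts := by
      rcases hzy with h | h
      · exact hcovIn y hy h
      · exact hcovOut y hy h
    obtain ⟨u, hu, hzu⟩ := Set.mem_iUnion₂.mp hx'
    obtain ⟨u', hu', hzu'⟩ := Set.mem_iUnion₂.mp hy'
    have huu' : u ≠ u' := by
      rintro rfl
      have := M₁.bag_disjoint x hx y hy hne
      exact absurd (Set.mem_inter hu hu') (by rw [this]; simp)
    have := M₂.bag_disjoint u (hbagD2 x hx u hu) u' (hbagD2 y hy u' hu') huu'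
    exact absurd (Set.mem_inter hzu hzu') (by rw [this]; simp)
  · -- bag_eq
    intro x _
    rfl
  · -- tin_arb
    intro x hx
    exact (htin x hx).1
  · -- tout_arb
    intro x hx
    show IsInArborescence (tout0 x).reverse.reverse x
    rw [reverse_reverse']
    exact (htout x hx).1
  · -- roots_eq
    intro x hx
    have hxD2 : x ∈ D₂.verts := by
      apply hbagD2 x hx
      rw [M₁.bag_eq x hx, union_verts]
      exact Or.inl (M₁.tin_arb x hx).1
    apply Set.eq_of_subset_of_subset
    · rintro z ⟨hz1, hz2⟩
      have hz2' : z ∈ (tout0 x).verts := hz2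
      obtain ⟨u, hu, hzu⟩ := Set.mem_iUnion₂.mp ((htin x hx).2.2.1 hz1)
      obtain ⟨u', hu', hzu'⟩ := Set.mem_iUnion₂.mp ((htout x hx).2.2.1 hz2')
      have hzu'' : z ∈ (M₂.bag u').verts := hzu'
      have huu' : u = u' := by
        by_contra hne
        have := M₂.bag_disjoint u
          (hbagD2 x hx u (by rw [M₁.bag_eq x hx, union_verts]; exact Or.inl hu))
          u' (hbagD2 x hx u' (by rw [M₁.bag_eq x hx, union_verts]; exact Or.inr hu')) hne
        exact absurd (Set.mem_inter hzu hzu'') (by rw [this]; simp)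
      subst huu'
      have hux : u = x := by
        have : u ∈ (M₁.tin x).verts ∩ (M₁.tout x).verts := ⟨hu, hu'⟩
        rw [M₁.roots_eq x hx] at this
        exact this
      subst hux
      have h1 : z ∈ (M₂.tin u).verts := (htin u hx).2.2.2.2 ⟨hz1, hzu⟩
      have h2 : z ∈ (M₂.tout u).verts := (htout u hx).2.2.2.2 ⟨hz2', hzu⟩
      have : z ∈ (M₂.tin u).verts ∩ (M₂.tout u).verts := ⟨h1, h2⟩
      rw [M₂.roots_eq u hxD2] at this
      exact this
    · rintro z hz
      rw [Set.mem_singleton_iff] at hz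
      subst hz
      constructor
      · exact (htin z hx).2.2.2.1 z (M₁.tin_arb z hx).1 (M₂.tin_arb z hxD2).1
      · show z ∈ (tout0 z).verts
        exact (htout z hx).2.2.2.1 z (M₁.tout_arb z hx).1 (M₂.tout_arb z hxD2).1
  · -- emap_mem
    intro e he
    exact M₂.emap_mem _ (M₁.emap_mem e he)
  · -- emap_tail
    intro e he
    by_cases hx : e.1 ∈ D₁.verts
    · have h1 : (M₁.emap e).1 ∈ (M₁.tout e.1).verts := M₁.emap_tail e he
      have h2 : (M₂.emap (M₁.emap e)).1 ∈ (M₂.tout (M₁.emap e).1).verts :=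
        M₂.emap_tail _ (M₁.emap_mem e he)
      show (M₂.emap (M₁.emap e)).1 ∈ (tout0 e.1).verts
      exact (htout e.1 hx).2.2.2.1 (M₁.emap e).1 h1 h2
    · show (M₂.emap (M₁.emap e)).1 ∈ (tout0 e.1).verts
      rw [htoutU e.1 hx]
      trivial
  · -- emap_head
    intro e he
    by_cases hx : e.2 ∈ D₁.verts
    · have h1 : (M₁.emap e).2 ∈ (M₁.tin e.2).verts := M₁.emap_head e he
      have h2 : (M₂.emap (M₁.emap e)).2 ∈ (M₂.tin (M₁.emap e).2).verts :=
        M₂.emap_head _ (M₁.emap_mem e he)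
      exact (htin e.2 hx).2.2.2.1 (M₁.emap e).2 h1 h2
    · rw [htinU e.2 hx]
      trivial


/-- If `D₁` is a butterfly minor of `D₂` and `D₂` is a
butterfly minor of `D₃`, then `D₁` is a butterfly minor of `D₃`. -/
theorem butterflyMinor_trans {V : Type u} (D₁ D₂ D₃ : DGraph V)
    (h₁₂ : D₂.IsButterflyMinor D₁) (h₂₃ : D₃.IsButterflyMinor D₂) :
    D₃.IsButterflyMinor D₁ := by
  exact butterflyMinor_trans' D₁ D₂ D₃ h₁₂ h₂₃
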